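/- When all rates r_i and capacities u_e are integers and the objective is (1-w)∑ c_e x_e + w ∑ φ_i(load_i(x)) with each φ_i piecewise-linear convex with integral breakpoints, there exists an optimal solution in which every edge flow x_e is an integer. -/

import Mathlib

open Finset

open Matrix

/-- total unimodularity of "network" matrices: entries in {0,1,-1}, each column has at most
one `1` and at most one `-1`. -/
lemma tu_det : ∀ (n : ℕ) (M : Matrix (Fin n) (Fin n) ℤ),
    (∀ i j, M i j = 0 ∨ M i j = 1 ∨ M i j = -1) →
    (∀ j i i', M i j = 1 → M i' j = 1 → i = i') →
    (∀ j i i', M i j = -1 → M i' j = -1 → i = i') →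
    M.det = 0 ∨ M.det = 1 ∨ M.det = -1 := by
  intro n
  induction n with
  | zero => intro M _ _ _; right; left; simp [Matrix.det_fin_zero]
  | succ n ih =>
    intro M hentry hone hneg
    by_cases hcol : ∃ j : Fin (n+1), ∀ i i' : Fin (n+1), M i j ≠ 0 → M i' j ≠ 0 → i = i'
    · -- some column has at most one nonzero entry; expand along it
      obtain ⟨j, hj⟩ := hcol
      rw [Matrix.det_succ_column M j]
      by_cases hz : ∀ i, M i j = 0
      · left; simp [hz]
      · push_neg at hz
        obtain ⟨i0, hi0⟩ := hz
        rw [Finset.sum_eq_single i0]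
        · have hminor := ih (M.submatrix i0.succAbove j.succAbove)
            (fun i j' => hentry _ _)
            (fun j' i i' h h' => by
              have := hone (j.succAbove j') _ _ h h'
              exact Fin.succAbove_right_injective this)
            (fun j' i i' h h' => by
              have := hneg (j.succAbove j') _ _ h h'
              exact Fin.succAbove_right_injective this)
          have hsign : ((-1 : ℤ) ^ ((i0 : ℕ) + (j : ℕ)) = 1 ∨ ((-1 : ℤ) ^ ((i0 : ℕ) + (j : ℕ)) = -1)) := by
            rcases Nat.even_or_odd ((i0 : ℕ) + (j : ℕ)) with h | h
            · left; exact h.neg_one_pow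
            · right; exact h.neg_one_pow
          rcases hentry i0 j with h | h | h
          · exact absurd h hi0
          all_goals rcases hminor with hm | hm | hm <;> rcases hsign with hs | hs <;>
            simp [h, hm, hs]
        · intro i _ hne
          by_cases h0 : M i j = 0
          · simp [h0]
          · exact absurd (hj i i0 h0 hi0) hne
        · intro h; exact absurd (Finset.mem_univ i0) h
    · -- every column has two nonzero entries: columns sum to zero, so det = 0
      push_neg at hcol
      left
      have hsum : ∀ j, (∑ i, M i j) = 0 := by
        intro j
        obtain ⟨i1, i2, h1, h2, hne⟩ := hcol j
        have hval : (M i1 j = 1 ∧ M i2 j = -1) ∨ (M i1 j = -1 ∧ M i2 j = 1) := by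
          rcases hentry i1 j with ha | ha | ha <;> rcases hentry i2 j with hb | hb | hb <;>
            first
            | (exact absurd ha h1)
            | (exact absurd hb h2)
            | (exact absurd (hone j _ _ ha hb) hne)
            | (exact absurd (hneg j _ _ ha hb) hne)
            | (exact Or.inl ⟨ha, hb⟩)
            | (exact Or.inr ⟨ha, hb⟩)
        have hrest : ∀ i, i ≠ i1 → i ≠ i2 → M i j = 0 := by
          intro i hi1 hi2
          rcases hentry i j with h | h | h
          · exact h
          · rcases hval with ⟨ha, hb⟩ | ⟨ha, hb⟩
            · exact absurd (hone j _ _ h ha) hi1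
            · exact absurd (hone j _ _ h hb) hi2
          · rcases hval with ⟨ha, hb⟩ | ⟨ha, hb⟩
            · exact absurd (hneg j _ _ h hb) hi2
            · exact absurd (hneg j _ _ h ha) hi1
        have : (∑ i, M i j) = M i1 j + M i2 j := by
          rw [← Finset.sum_subset (Finset.subset_univ {i1, i2})]
          · rw [Finset.sum_pair hne]
          · intro i _ hi
            simp only [Finset.mem_insert, Finset.mem_singleton, not_or] at hi
            exact hrest i hi.1 hi.2
        rcases hval with ⟨ha, hb⟩ | ⟨ha, hb⟩ <;> rw [this, ha, hb] <;> ring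
      have : ∃ v : Fin (n+1) → ℤ, v ≠ 0 ∧ v ᵥ* M = 0 := by
        refine ⟨fun _ => 1, ?_, ?_⟩
        · intro h
          have := congrFun h 0
          simp at this
        · funext j
          simpa [Matrix.vecMul, dotProduct] using hsum j
      exact Matrix.exists_vecMul_eq_zero_iff.mp this

lemma integral_of_tu {ι R : Type*} [Fintype ι] [Fintype R] [DecidableEq ι] [DecidableEq R]
    (N : Matrix R ι ℤ)
    (hentry : ∀ r i, N r i = 0 ∨ N r i = 1 ∨ N r i = -1)
    (hone : ∀ i r r', N r i = 1 → N r' i = 1 → r = r')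
    (hneg : ∀ i r r', N r i = -1 → N r' i = -1 → r = r')
    (x : ι → ℝ) (b : R → ℤ)
    (hx : ∀ r, ∑ i, (N r i : ℝ) * x i = (b r : ℝ))
    (hker : ∀ d : ι → ℝ, (∀ r, ∑ i, (N r i : ℝ) * d i = 0) → d = 0) :
    ∀ i, ∃ z : ℤ, x i = (z : ℝ) := by
  classical
  -- rows as elements of Euclidean space
  set rows : R → EuclideanSpace ℝ ι := fun r => WithLp.toLp 2 (fun i => (N r i : ℝ)) with hrows
  have hinner : ∀ (r : R) (d : EuclideanSpace ℝ ι),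
      (inner ℝ (rows r) d : ℝ) = ∑ i, (N r i : ℝ) * d i := by
    intro r d
    simp [PiLp.inner_apply, RCLike.inner_apply, hrows, mul_comm]
  -- the rows span everything
  have hspan : Submodule.span ℝ (Set.range rows) = ⊤ := by
    rw [← Submodule.orthogonal_eq_bot_iff]
    rw [Submodule.eq_bot_iff]
    intro d hd
    have : ∀ r, (inner ℝ (rows r) d : ℝ) = 0 := fun r =>
      (Submodule.mem_orthogonal _ d).mp hd (rows r) (Submodule.subset_span ⟨r, rfl⟩)
    exact WithLp.ofLp_injective 2 (hker d.ofLp (fun r => by rw [← hinner r d]; exact this r))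
  obtain ⟨s, hs_sub, hs_span, hs_li⟩ := exists_linearIndependent ℝ (Set.range rows)
  rw [hspan] at hs_span
  have hs_fin : s.Finite := (Set.finite_range rows).subset hs_sub
  haveI := hs_fin.fintype
  have hbasis : Module.Basis ↥s ℝ (EuclideanSpace ℝ ι) := Module.Basis.mk hs_li (by rw [Subtype.range_val]; rw [hs_span])
  have hcard : Fintype.card ↥s = Fintype.card ι := by
    rw [← Module.finrank_eq_card_basis hbasis, finrank_euclideanSpace]
  obtain e : ι ≃ ↥s := (Fintype.equivOfCardEq hcard).symm
  -- choose a row index for each basis element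
  have hchoice : ∀ v : ↥s, ∃ r : R, rows r = (v : EuclideanSpace ℝ ι) := fun v => hs_sub v.2
  choose ρ hρ using hchoice
  set ρ' : ι → R := fun i => ρ (e i) with hρ'
  set M' : Matrix ι ι ℤ := fun i j => N (ρ' i) j with hM'
  set A : Matrix ι ι ℝ := fun i j => (M' i j : ℝ) with hA
  have hAmap : A = (Int.castRingHom ℝ).mapMatrix M' := rfl
  -- A has linearly independent rows, so nonzero determinant
  have hrowA : ∀ i, (fun j => A i j) = rows (ρ' i) := fun i => rfl
  have hdetA : A.det ≠ 0 := by
    intro h0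
    obtain ⟨v, hv, hvM⟩ := Matrix.exists_vecMul_eq_zero_iff.mpr h0
    have hli2 : LinearIndependent ℝ (fun i : ι => ((e i : ↥s) : EuclideanSpace ℝ ι)) :=
      hs_li.comp (fun i => e i) e.injective
    have : ∀ v' : ι → ℝ, (∑ i, v' i • ((e i : ↥s) : EuclideanSpace ℝ ι)) = 0 → ∀ i, v' i = 0 :=
      Fintype.linearIndependent_iff.mp hli2
    refine hv (funext fun i => this v ?_ i)
    refine WithLp.ofLp_injective 2 (funext fun j => ?_)
    have hthis := congrFun hvM j
    simp only [Matrix.vecMul, dotProduct, Pi.zero_apply] at hthis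
    show (∑ i, v i • ((e i : ↥s) : EuclideanSpace ℝ ι)) j = (0 : EuclideanSpace ℝ ι) j
    have hz : ((0 : EuclideanSpace ℝ ι)) j = (0:ℝ) := rfl
    rw [hz, ← hthis, WithLp.ofLp_sum, Finset.sum_apply]
    apply Finset.sum_congr rfl
    intro i _
    have hei : ((e i : ↥s) : EuclideanSpace ℝ ι) = rows (ρ' i) := (hρ (e i)).symm
    rw [hei]
    rfl
  have hρ'inj : Function.Injective ρ' := by
    intro a b hab
    apply e.injective
    apply Subtype.coe_injective
    exact (hρ (e a)).symm.trans ((congrArg rows hab).trans (hρ (e b)))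
  -- determinant of M' is ±1
  have hdet_cast : A.det = ((M'.det : ℤ) : ℝ) := by
    rw [hAmap, ← RingHom.map_det]
    rfl
  have hdetM' : M'.det = 1 ∨ M'.det = -1 := by
    have hre := Fintype.equivFin ι
    have htu := tu_det (Fintype.card ι) (M'.submatrix hre.symm hre.symm)
      (fun i j => hentry _ _)
      (fun j i i' h h' => by
        have h2 := hone (hre.symm j) _ _ h h'
        exact (Equiv.symm hre).injective (hρ'inj h2))
      (fun j i i' h h' => by
        have h2 := hneg (hre.symm j) _ _ h h'
        exact (Equiv.symm hre).injective (hρ'inj h2))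
    rw [Matrix.det_submatrix_equiv_self] at htu
    rcases htu with h | h | h
    · exfalso; apply hdetA; rw [hdet_cast, h]; simp
    · exact Or.inl h
    · exact Or.inr h
  -- Cramer's rule: A.det • x = cramer A b'
  set x' : ι → ℝ := fun i => x i with hx'
  set b' : ι → ℝ := fun i => ((b (ρ' i) : ℤ) : ℝ) with hb'
  have hmv : A.mulVec x' = b' := by
    funext i
    simp only [Matrix.mulVec, dotProduct]
    exact hx (ρ' i)
  have hcr : A.det • x' = Matrix.cramer A b' := by
    rw [← hmv, Matrix.cramer_eq_adjugate_mulVec, Matrix.mulVec_mulVec, Matrix.adjugate_mul,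
      Matrix.smul_mulVec, Matrix.one_mulVec]
  -- each cramer entry is an integer
  intro i
  have hcram_int : ∃ z : ℤ, Matrix.cramer A b' i = (z : ℝ) := by
    refine ⟨(Matrix.cramer M' (fun i => b (ρ' i)) i : ℤ), ?_⟩
    rw [Matrix.cramer_apply, Matrix.cramer_apply]
    rw [show A.updateCol i b' = ((M'.updateCol i (fun i => b (ρ' i))).map (Int.cast : ℤ → ℝ)) by
      rw [Matrix.map_updateCol]; rfl]
    rw [show ((M'.updateCol i fun i => b (ρ' i)).map (Int.cast : ℤ → ℝ)) = (Int.castRingHom ℝ).mapMatrix (M'.updateCol i fun i => b (ρ' i)) from rfl]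
    rw [← RingHom.map_det]
    rfl
  obtain ⟨z, hz⟩ := hcram_int
  have hxi := congrFun (congrArg (fun v => v) hcr) i
  rcases hdetM' with h | h
  · refine ⟨z, ?_⟩
    have : A.det = 1 := by rw [hdet_cast, h]; simp
    have h2 := congrFun hcr i
    simp only [Pi.smul_apply, this, one_smul, smul_eq_mul, one_mul] at h2
    exact h2.trans hz
  · refine ⟨-z, ?_⟩
    have hA1 : A.det = -1 := by rw [hdet_cast, h]; simp
    have h2 := congrFun hcr i
    rw [hA1] at h2
    have h2' : -(x' i) = Matrix.cramer A b' i := by simpa using h2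
    have h3 : x' i = -(z:ℝ) := by rw [← hz, ← h2']; ring
    show x i = ((-z : ℤ) : ℝ)
    push_cast
    exact h3

lemma sum_integral {α : Type*} (s : Finset α) (f : α → ℝ) (h : ∀ e ∈ s, ∃ z : ℤ, f e = (z:ℝ)) :
    ∃ z : ℤ, ∑ e ∈ s, f e = (z:ℝ) := by
  classical
  induction s using Finset.cons_induction with
  | empty => exact ⟨0, by simp⟩
  | cons a s ha ih =>
    obtain ⟨z1, hz1⟩ := h a (Finset.mem_cons_self a s)
    obtain ⟨z2, hz2⟩ := ih (fun e he => h e (Finset.mem_cons_of_mem he))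
    exact ⟨z1 + z2, by rw [Finset.sum_cons, hz1, hz2]; push_cast; ring⟩

lemma exists_direction {V E : Type*} [Fintype V] [Fintype E] [DecidableEq V]
    (tail head : E → V) (S : Finset V) (r : V → ℕ) (x : E → ℝ)
    (hcons : ∀ i ∈ S, (∑ e ∈ univ.filter (fun e => tail e = i), x e)
          - (∑ e ∈ univ.filter (fun e => head e = i), x e) = (r i : ℝ))
    (e0 : E) (he0 : ¬∃ z : ℤ, x e0 = (z:ℝ)) :
    ∃ D : E → ℝ, D ≠ 0 ∧ (∀ e, D e ≠ 0 → ¬∃ z : ℤ, x e = (z:ℝ)) ∧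
      (∀ i ∈ S, (∑ e ∈ univ.filter (fun e => tail e = i), D e)
          - (∑ e ∈ univ.filter (fun e => head e = i), D e) = 0) ∧
      (∀ i, (∃ z : ℤ, (∑ e ∈ univ.filter (fun e => tail e = i), x e) = (z:ℝ)) →
        (∑ e ∈ univ.filter (fun e => tail e = i), D e) = 0) := by
  classical
  by_contra hnoD
  push_neg at hnoD
  -- the fractional edges and the integral-load nodes
  set A : Finset E := univ.filter (fun e => ¬∃ z : ℤ, x e = (z:ℝ)) with hA
  set B : Finset V := univ.filter
    (fun i => ∃ z : ℤ, (∑ e ∈ univ.filter (fun e => tail e = i), x e) = (z:ℝ)) with hB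
  have he0A : e0 ∈ A := by rw [hA, Finset.mem_filter]; exact ⟨Finset.mem_univ _, he0⟩
  -- the constraint matrix
  set N : Matrix (↥S ⊕ ↥B) (↥A) ℤ := fun rr a =>
    match rr with
    | Sum.inl i => if (i:V) ∈ B then (if head (a:E) = (i:V) then -1 else 0)
        else ((if tail (a:E) = (i:V) then 1 else 0) - (if head (a:E) = (i:V) then 1 else 0))
    | Sum.inr j => if tail (a:E) = (j:V) then 1 else 0
    with hN
  -- generic sum computation for rows
  have hrowsum : ∀ (p : E → V) (i : V),
      ∑ a : ↥A, ((if p (a:E) = i then (1:ℤ) else 0) : ℝ) * x a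
        = ∑ e ∈ A.filter (fun e => p e = i), x e := by
    intro p i
    rw [Finset.sum_coe_sort A (fun e => ((if p e = i then (1:ℤ) else 0) : ℝ) * x e)]
    conv_rhs => rw [Finset.sum_filter]
    apply Finset.sum_congr rfl
    intro e _
    by_cases h : p e = i <;> simp [h]
  -- the partial sums over non-fractional edges are integral
  have hboundary : ∀ (p : E → V) (i : V), ∃ z : ℤ,
      (∑ e ∈ univ.filter (fun e => p e = i), x e) - (∑ e ∈ A.filter (fun e => p e = i), x e)
        = (z:ℝ) := by
    intro p i
    have hsub : A.filter (fun e => p e = i) ⊆ univ.filter (fun e => p e = i) := by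
      intro e he
      simp only [Finset.mem_filter] at he ⊢
      exact ⟨Finset.mem_univ e, he.2⟩
    rw [← Finset.sum_sdiff hsub, add_sub_cancel_right]
    apply sum_integral
    intro e he
    rw [Finset.mem_sdiff, Finset.mem_filter, Finset.mem_filter] at he
    by_contra hz
    have heA : e ∈ A := by rw [hA, Finset.mem_filter]; exact ⟨Finset.mem_univ _, hz⟩
    exact he.2 ⟨heA, he.1.2⟩
  -- integrality of the right-hand sides
  have hbint : ∀ rr : ↥S ⊕ ↥B, ∃ z : ℤ, ∑ a : ↥A, ((N rr a : ℤ) : ℝ) * x a = (z:ℝ) := by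
    intro rr
    match rr with
    | Sum.inl i =>
      by_cases hiB : (i:V) ∈ B
      · -- row is -(incoming A-flow); in-flow = load - r is integral
        have hcalc : ∑ a : ↥A, ((N (Sum.inl i) a : ℤ) : ℝ) * x a
            = -(∑ e ∈ A.filter (fun e => head e = (i:V)), x e) := by
          rw [← hrowsum head (i:V), ← Finset.sum_neg_distrib]
          apply Finset.sum_congr rfl
          intro a _
          simp only [hN, hiB, if_true]
          by_cases h : head (a:E) = (i:V) <;> simp [h]
        obtain ⟨z1, hz1⟩ := hboundary head (i:V)
        obtain ⟨z2, hz2⟩ := (Finset.mem_filter.mp hiB).2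
        have hc := hcons (i:V) i.2
        refine ⟨-(z2 - (r (i:V)) - z1), ?_⟩
        rw [hcalc]
        push_cast
        have : (∑ e ∈ univ.filter (fun e => head e = (i:V)), x e)
            = (∑ e ∈ univ.filter (fun e => tail e = (i:V)), x e) - (r (i:V) : ℝ) := by
          linarith [hc]
        linarith [hz1, hz2, this]
      · -- row is the divergence restricted to A
        have hcalc : ∑ a : ↥A, ((N (Sum.inl i) a : ℤ) : ℝ) * x a
            = (∑ e ∈ A.filter (fun e => tail e = (i:V)), x e)
              - (∑ e ∈ A.filter (fun e => head e = (i:V)), x e) := by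
          rw [← hrowsum tail (i:V), ← hrowsum head (i:V), ← Finset.sum_sub_distrib]
          apply Finset.sum_congr rfl
          intro a _
          simp only [hN, hiB, if_false]
          push_cast
          ring
        obtain ⟨zt, hzt⟩ := hboundary tail (i:V)
        obtain ⟨zh, hzh⟩ := hboundary head (i:V)
        have hc := hcons (i:V) i.2
        refine ⟨(r (i:V) : ℤ) - zt + zh, ?_⟩
        rw [hcalc]
        push_cast
        linarith [hzt, hzh, hc]
    | Sum.inr j =>
      have hcalc : ∑ a : ↥A, ((N (Sum.inr j) a : ℤ) : ℝ) * x a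
          = ∑ e ∈ A.filter (fun e => tail e = (j:V)), x e := by
        rw [← hrowsum tail (j:V)]
        apply Finset.sum_congr rfl
        intro a _
        by_cases h : tail (a:E) = (j:V) <;> simp [hN, h]
      obtain ⟨z1, hz1⟩ := hboundary tail (j:V)
      obtain ⟨z2, hz2⟩ := (Finset.mem_filter.mp j.2).2
      exact ⟨z2 - z1, by rw [hcalc]; push_cast; linarith [hz1, hz2]⟩
  choose b hb using hbint
  -- entries pattern
  have hentry : ∀ (rr : ↥S ⊕ ↥B) (a : ↥A), N rr a = 0 ∨ N rr a = 1 ∨ N rr a = -1 := by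
    intro rr a
    match rr with
    | Sum.inl i =>
      by_cases hiB : (i:V) ∈ B
      · by_cases h : head (a:E) = (i:V) <;> simp [hN, hiB, h]
      · by_cases h1 : tail (a:E) = (i:V) <;> by_cases h2 : head (a:E) = (i:V) <;>
          simp [hN, hiB, h1, h2]
    | Sum.inr j => by_cases h : tail (a:E) = (j:V) <;> simp [hN, h]
  have extract_one : ∀ (a : ↥A) rr0, N rr0 a = 1 →
      (∃ i : ↥S, rr0 = Sum.inl i ∧ (i:V) ∉ B ∧ tail (a:E) = (i:V)) ∨
      (∃ j : ↥B, rr0 = Sum.inr j ∧ tail (a:E) = (j:V)) := by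
    intro a rr0 h0
    match rr0 with
    | Sum.inl i =>
      left
      by_cases hiB : (i:V) ∈ B
      · exfalso; by_cases hh : head (a:E) = (i:V) <;> simp [hN, hiB, hh] at h0
      · by_cases h1 : tail (a:E) = (i:V)
        · exact ⟨i, rfl, hiB, h1⟩
        · exfalso; by_cases h2 : head (a:E) = (i:V) <;> simp [hN, hiB, h1, h2] at h0
    | Sum.inr j =>
      right
      by_cases h1 : tail (a:E) = (j:V)
      · exact ⟨j, rfl, h1⟩
      · exfalso; simp [hN, h1] at h0
  have extract_neg : ∀ (a : ↥A) rr0, N rr0 a = -1 →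
      ∃ i : ↥S, rr0 = Sum.inl i ∧ head (a:E) = (i:V) := by
    intro a rr0 h0
    match rr0 with
    | Sum.inl i =>
      by_cases hh : head (a:E) = (i:V)
      · exact ⟨i, rfl, hh⟩
      · exfalso
        by_cases hiB : (i:V) ∈ B
        · simp [hN, hiB, hh] at h0
        · by_cases h1 : tail (a:E) = (i:V) <;> simp [hN, hiB, hh, h1] at h0
    | Sum.inr j =>
      exfalso; by_cases h1 : tail (a:E) = (j:V) <;> simp [hN, h1] at h0
  have hone : ∀ (a : ↥A) rr rr', N rr a = 1 → N rr' a = 1 → rr = rr' := by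
    intro a rr rr' h h'
    rcases extract_one a rr h with ⟨i, rfl, hiB, hti⟩ | ⟨j, rfl, htj⟩ <;>
      rcases extract_one a rr' h' with ⟨i', rfl, hiB', hti'⟩ | ⟨j', rfl, htj'⟩
    · exact congrArg Sum.inl (Subtype.coe_injective (hti.symm.trans hti'))
    · exfalso
      have hij : (i:V) = (j':V) := hti.symm.trans htj'
      exact hiB (hij ▸ j'.2)
    · exfalso
      have hij : (i':V) = (j:V) := hti'.symm.trans htj
      exact hiB' (hij ▸ j.2)
    · exact congrArg Sum.inr (Subtype.coe_injective (htj.symm.trans htj'))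
  have hneg : ∀ (a : ↥A) rr rr', N rr a = -1 → N rr' a = -1 → rr = rr' := by
    intro a rr rr' h h'
    obtain ⟨i, rfl, hhi⟩ := extract_neg a rr h
    obtain ⟨i', rfl, hhi'⟩ := extract_neg a rr' h'
    exact congrArg Sum.inl (Subtype.coe_injective (hhi.symm.trans hhi'))
  -- the kernel is trivial, since a nonzero kernel element would give a direction
  have hker : ∀ d : ↥A → ℝ, (∀ rr, ∑ a : ↥A, ((N rr a : ℤ) : ℝ) * d a = 0) → d = 0 := by
    intro d hd
    by_contra hdne
    set D : E → ℝ := fun e => if h : e ∈ A then d ⟨e, h⟩ else 0 with hD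
    have hDval : ∀ a : ↥A, D (a:E) = d a := by
      intro a
      rw [hD]
      simp only [a.2, dif_pos]
    have hDsum : ∀ (p : E → V) (i : V), ∑ e ∈ univ.filter (fun e => p e = i), D e
        = ∑ a : ↥A, ((if p (a:E) = i then (1:ℤ) else 0) : ℝ) * d a := by
      intro p i
      have hsub : A.filter (fun e => p e = i) ⊆ univ.filter (fun e => p e = i) := by
        intro e he
        rw [Finset.mem_filter] at he ⊢
        exact ⟨Finset.mem_univ e, he.2⟩
      have hzero : ∀ e ∈ univ.filter (fun e => p e = i), e ∉ A.filter (fun e => p e = i) → D e = 0 := by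
        intro e he hne
        rw [hD]
        have heA : e ∉ A := by
          intro heA
          exact hne (Finset.mem_filter.mpr ⟨heA, (Finset.mem_filter.mp he).2⟩)
        simp only [heA, dif_neg, not_false_iff]
      calc ∑ e ∈ univ.filter (fun e => p e = i), D e
          = ∑ e ∈ A.filter (fun e => p e = i), D e := (Finset.sum_subset hsub hzero).symm
        _ = ∑ e ∈ A, (if p e = i then D e else 0) := Finset.sum_filter _ _
        _ = ∑ a : ↥A, (if p (a:E) = i then D (a:E) else 0) :=
            (Finset.sum_coe_sort A (fun e => if p e = i then D e else 0)).symm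
        _ = ∑ a : ↥A, ((if p (a:E) = i then (1:ℤ) else 0) : ℝ) * d a := by
            apply Finset.sum_congr rfl
            intro a _
            by_cases h : p (a:E) = i <;> simp [h, hDval a]
    have hDnz : D ≠ 0 := by
      obtain ⟨a, ha⟩ : ∃ a, d a ≠ 0 := by
        by_contra h
        push_neg at h
        exact hdne (funext h)
      intro hDz
      apply ha
      rw [← hDval a, hDz]
      rfl
    have hsupp : ∀ e, D e ≠ 0 → ¬∃ z : ℤ, x e = (z:ℝ) := by
      intro e he
      by_cases heA : e ∈ A
      · exact (Finset.mem_filter.mp heA).2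
      · exfalso; apply he; rw [hD]; simp only [heA, dif_neg, not_false_iff]
    have houtB : ∀ j : ↥B, ∑ e ∈ univ.filter (fun e => tail e = (j:V)), D e = 0 := by
      intro j
      rw [hDsum tail (j:V)]
      refine Eq.trans ?_ (hd (Sum.inr j))
      apply Finset.sum_congr rfl
      intro a _
      by_cases h : tail (a:E) = (j:V) <;> simp [hN, h]
    have hdiv : ∀ i ∈ S, (∑ e ∈ univ.filter (fun e => tail e = i), D e)
        - (∑ e ∈ univ.filter (fun e => head e = i), D e) = 0 := by
      intro i hiS
      by_cases hiB : i ∈ B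
      · have h1 := houtB ⟨i, hiB⟩
        have h2 : ∑ e ∈ univ.filter (fun e => head e = i), D e = 0 := by
          rw [hDsum head i]
          have := hd (Sum.inl ⟨i, hiS⟩)
          have hneg : ∑ a : ↥A, ((if head (a:E) = i then (1:ℤ) else 0) : ℝ) * d a
              = -∑ a : ↥A, ((N (Sum.inl (⟨i, hiS⟩ : ↥S)) a : ℤ) : ℝ) * d a := by
            rw [← Finset.sum_neg_distrib]
            apply Finset.sum_congr rfl
            intro a _
            by_cases h : head (a:E) = i <;> simp [hN, hiB, h]
          rw [hneg, this, neg_zero]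
        rw [h1, h2, sub_zero]
      · rw [hDsum tail i, hDsum head i, ← Finset.sum_sub_distrib]
        refine Eq.trans ?_ (hd (Sum.inl ⟨i, hiS⟩))
        apply Finset.sum_congr rfl
        intro a _
        by_cases h1 : tail (a:E) = i <;> by_cases h2 : head (a:E) = i <;>
          simp [hN, hiB, h1, h2]
    have hload : ∀ i, (∃ z : ℤ, (∑ e ∈ univ.filter (fun e => tail e = i), x e) = (z:ℝ)) →
        (∑ e ∈ univ.filter (fun e => tail e = i), D e) = 0 := by
      intro i hi
      have hiB : i ∈ B := by rw [hB, Finset.mem_filter]; exact ⟨Finset.mem_univ _, hi⟩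
      exact houtB ⟨i, hiB⟩
    obtain ⟨i, hint, hne2⟩ := hnoD D hDnz (fun e he z hz => hsupp e he ⟨z, hz⟩) hdiv
    exact hne2 (hload i hint)
  have hint := integral_of_tu N
    (fun rr a => hentry rr a)
    (fun a rr rr' => hone a rr rr')
    (fun a rr rr' => hneg a rr rr')
    (fun a : ↥A => x (a:E)) b hb hker
  obtain ⟨z, hz⟩ := hint ⟨e0, he0A⟩
  exact he0 ⟨z, hz⟩

noncomputable def stepBound (y s : ℝ) : ℝ :=
  if 0 < s then ((⌊y⌋ : ℝ) + 1 - y)/s else ((⌈y⌉ : ℝ) - 1 - y)/s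

lemma frac_ceil {y : ℝ} (h : ¬∃ z : ℤ, y = (z:ℝ)) : (⌈y⌉ : ℝ) = (⌊y⌋ : ℝ) + 1 := by
  have h1 : ⌈y⌉ ≤ ⌊y⌋ + 1 := Int.ceil_le_floor_add_one y
  have h2 : ⌊y⌋ < ⌈y⌉ := by
    rcases lt_or_eq_of_le (Int.floor_le_ceil y) with h' | h'
    · exact h'
    · exfalso
      apply h
      refine ⟨⌊y⌋, le_antisymm ?_ (Int.floor_le y)⟩
      have hcast : ((⌊y⌋:ℤ):ℝ) = ((⌈y⌉:ℤ):ℝ) := by rw [h']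
      rw [hcast]
      exact Int.le_ceil y
  have : ⌈y⌉ = ⌊y⌋ + 1 := le_antisymm h1 h2
  exact_mod_cast this

lemma stepBound_pos {y s : ℝ} (hs : s ≠ 0) : 0 < stepBound y s := by
  rcases lt_or_gt_of_ne hs with h | h
  · rw [stepBound, if_neg (by linarith)]
    apply div_pos_of_neg_of_neg _ h
    have := Int.ceil_lt_add_one y
    linarith
  · rw [stepBound, if_pos h]
    apply div_pos _ h
    have := Int.lt_floor_add_one y
    linarith

lemma stepBound_mem {y s t : ℝ} (hs : s ≠ 0) (hfrac : ¬∃ z : ℤ, y = (z:ℝ))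
    (ht0 : 0 ≤ t) (ht : t ≤ stepBound y s) :
    (⌊y⌋:ℝ) ≤ y + t*s ∧ y + t*s ≤ (⌊y⌋:ℝ) + 1 := by
  have hfl : (⌊y⌋:ℝ) ≤ y := Int.floor_le y
  have hcl : y ≤ (⌈y⌉:ℝ) := Int.le_ceil y
  have hce := frac_ceil hfrac
  rcases lt_or_gt_of_ne hs with h | h
  · rw [stepBound, if_neg (by linarith)] at ht
    constructor
    · have : t * s ≥ (((⌈y⌉:ℝ) - 1 - y)/s) * s := by
        apply mul_le_mul_of_nonpos_right ht (le_of_lt h)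
      rw [div_mul_cancel₀ _ hs] at this
      linarith
    · nlinarith
  · rw [stepBound, if_pos h] at ht
    constructor
    · nlinarith
    · have : t * s ≤ (((⌊y⌋:ℝ) + 1 - y)/s) * s := by
        apply mul_le_mul_of_nonneg_right ht (le_of_lt h)
      rw [div_mul_cancel₀ _ hs] at this
      linarith

lemma stepBound_hit {y s : ℝ} (hs : s ≠ 0) :
    ∃ z : ℤ, y + stepBound y s * s = (z:ℝ) := by
  rcases lt_or_gt_of_ne hs with h | h
  · refine ⟨⌈y⌉ - 1, ?_⟩
    rw [stepBound, if_neg (by linarith), div_mul_cancel₀ _ hs]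
    push_cast
    ring
  · refine ⟨⌊y⌋ + 1, ?_⟩
    rw [stepBound, if_pos h, div_mul_cancel₀ _ hs]
    push_cast
    ring

open Classical in
noncomputable def fracE {E : Type*} [Fintype E] (x : E → ℝ) : Finset E :=
  univ.filter (fun e => ¬∃ z : ℤ, x e = (z:ℝ))

open Classical in
noncomputable def fracV {V E : Type*} [Fintype V] [Fintype E] [DecidableEq V]
    (tail : E → V) (x : E → ℝ) : Finset V :=
  univ.filter (fun i => ¬∃ z : ℤ, (∑ e ∈ univ.filter (fun e => tail e = i), x e) = (z:ℝ))

noncomputable def muM {V E : Type*} [Fintype V] [Fintype E] [DecidableEq V]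
    (tail : E → V) (x : E → ℝ) : ℕ :=
  (fracE x).card + (fracV tail x).card

lemma mem_fracE {E : Type*} [Fintype E] (x : E → ℝ) (e : E) :
    e ∈ fracE x ↔ ¬∃ z : ℤ, x e = (z:ℝ) := by
  classical
  simp [fracE]

lemma mem_fracV {V E : Type*} [Fintype V] [Fintype E] [DecidableEq V]
    (tail : E → V) (x : E → ℝ) (i : V) :
    i ∈ fracV tail x ↔ ¬∃ z : ℤ, (∑ e ∈ univ.filter (fun e => tail e = i), x e) = (z:ℝ) := by
  classical
  simp [fracV]

lemma load_linear {V E : Type*} [Fintype V] [Fintype E] [DecidableEq V]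
    (p : E → V) (x D : E → ℝ) (t : ℝ) (i : V) :
    ∑ e ∈ univ.filter (fun e => p e = i), (x e + t * D e)
      = (∑ e ∈ univ.filter (fun e => p e = i), x e)
        + t * ∑ e ∈ univ.filter (fun e => p e = i), D e := by
  rw [Finset.sum_add_distrib, Finset.mul_sum]

lemma direction_step {V E : Type*} [Fintype V] [Fintype E] [DecidableEq V]
    (tail head : E → V) (S : Finset V) (r : V → ℕ) (u : E → ℕ)
    (c : E → ℝ) (w : ℝ)
    (φ : V → ℝ → ℝ)
    (x : E → ℝ)
    (hcons : ∀ i ∈ S, (∑ e ∈ univ.filter (fun e => tail e = i), x e)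
          - (∑ e ∈ univ.filter (fun e => head e = i), x e) = (r i : ℝ))
    (hbdd : ∀ e, 0 ≤ x e ∧ x e ≤ (u e : ℝ))
    (a bb : V → ℝ)
    (ha : ∀ i, (¬∃ z : ℤ, (∑ e ∈ univ.filter (fun e => tail e = i), x e) = (z:ℝ)) →
      ∀ y ∈ Set.Icc ((⌊(∑ e ∈ univ.filter (fun e => tail e = i), x e)⌋ : ℝ))
        ((⌊(∑ e ∈ univ.filter (fun e => tail e = i), x e)⌋ : ℝ) + 1), φ i y = a i * y + bb i)
    (D : E → ℝ) (hDnz : D ≠ 0)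
    (hsupp : ∀ e, D e ≠ 0 → ¬∃ z : ℤ, x e = (z:ℝ))
    (hdiv : ∀ i ∈ S, (∑ e ∈ univ.filter (fun e => tail e = i), D e)
          - (∑ e ∈ univ.filter (fun e => head e = i), D e) = 0)
    (hload0 : ∀ i, (∃ z : ℤ, (∑ e ∈ univ.filter (fun e => tail e = i), x e) = (z:ℝ)) →
        (∑ e ∈ univ.filter (fun e => tail e = i), D e) = 0) :
    ∃ x' : E → ℝ,
      (∀ i ∈ S, (∑ e ∈ univ.filter (fun e => tail e = i), x' e)
          - (∑ e ∈ univ.filter (fun e => head e = i), x' e) = (r i : ℝ)) ∧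
      (∀ e, 0 ≤ x' e ∧ x' e ≤ (u e : ℝ)) ∧
      muM tail x' < muM tail x ∧
      ∃ t : ℝ, 0 < t ∧
        ((1 - w) * ∑ e, c e * x' e
            + w * ∑ i, φ i (∑ e ∈ univ.filter (fun e => tail e = i), x' e))
          = ((1 - w) * ∑ e, c e * x e
            + w * ∑ i, φ i (∑ e ∈ univ.filter (fun e => tail e = i), x e))
            + t * ((1 - w) * ∑ e, c e * D e
              + w * ∑ i, a i * (∑ e ∈ univ.filter (fun e => tail e = i), D e)) := by
  classical
  set load : V → ℝ := fun i => ∑ e ∈ univ.filter (fun e => tail e = i), x e with hloaddef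
  set δ : V → ℝ := fun i => ∑ e ∈ univ.filter (fun e => tail e = i), D e with hδdef
  set ME : Finset E := univ.filter (fun e => D e ≠ 0) with hME
  set MV : Finset V := univ.filter (fun i => δ i ≠ 0) with hMV
  have hMEne : ME.Nonempty := by
    obtain ⟨e, he⟩ : ∃ e, D e ≠ 0 := by
      by_contra h
      push_neg at h
      exact hDnz (funext h)
    exact ⟨e, by rw [hME, Finset.mem_filter]; exact ⟨Finset.mem_univ _, he⟩⟩
  set T : Finset ℝ := ME.image (fun e => stepBound (x e) (D e))
      ∪ MV.image (fun i => stepBound (load i) (δ i)) with hT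
  have hTne : T.Nonempty := by
    obtain ⟨e, he⟩ := hMEne
    exact ⟨stepBound (x e) (D e), Finset.mem_union_left _ (Finset.mem_image_of_mem _ he)⟩
  set t := T.min' hTne with ht
  have htmem := T.min'_mem hTne
  have htpos : 0 < t := by
    rw [ht]
    rcases Finset.mem_union.mp htmem with h | h
    · obtain ⟨e, heME, hev⟩ := Finset.mem_image.mp h
      rw [← hev]
      exact stepBound_pos (Finset.mem_filter.mp heME).2
    · obtain ⟨i, hiMV, hiv⟩ := Finset.mem_image.mp h
      rw [← hiv]
      exact stepBound_pos (Finset.mem_filter.mp hiMV).2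
  have htleE : ∀ e, D e ≠ 0 → t ≤ stepBound (x e) (D e) := by
    intro e he
    apply Finset.min'_le
    exact Finset.mem_union_left _ (Finset.mem_image_of_mem _
      (Finset.mem_filter.mpr ⟨Finset.mem_univ _, he⟩))
  have htleV : ∀ i, δ i ≠ 0 → t ≤ stepBound (load i) (δ i) := by
    intro i hi
    apply Finset.min'_le
    exact Finset.mem_union_right _ (Finset.mem_image_of_mem _
      (Finset.mem_filter.mpr ⟨Finset.mem_univ _, hi⟩))
  set x' : E → ℝ := fun e => x e + t * D e with hx'
  -- basic interval facts for moving edges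
  have hedge : ∀ e, D e ≠ 0 → (⌊x e⌋:ℝ) ≤ x' e ∧ x' e ≤ (⌊x e⌋:ℝ) + 1 :=
    fun e he => stepBound_mem he (hsupp e he) (le_of_lt htpos) (htleE e he)
  have hload' : ∀ (p : E → V) (i : V), ∑ e ∈ univ.filter (fun e => p e = i), x' e
      = (∑ e ∈ univ.filter (fun e => p e = i), x e)
        + t * ∑ e ∈ univ.filter (fun e => p e = i), D e := fun p i => load_linear p x D t i
  have hnode : ∀ i, δ i ≠ 0 →
      ((⌊load i⌋:ℝ) ≤ load i + t * δ i ∧ load i + t * δ i ≤ (⌊load i⌋:ℝ) + 1)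
      ∧ ¬∃ z : ℤ, load i = (z:ℝ) := by
    intro i hi
    have hfrac : ¬∃ z : ℤ, load i = (z:ℝ) := by
      intro hz
      exact hi (hload0 i hz)
    exact ⟨stepBound_mem hi hfrac (le_of_lt htpos) (htleV i hi), hfrac⟩
  refine ⟨x', ?_, ?_, ?_, ?_⟩
  · -- conservation
    intro i hiS
    have h2' : (∑ e ∈ univ.filter (fun e => tail e = i), D e)
        = (∑ e ∈ univ.filter (fun e => head e = i), D e) := by linarith [hdiv i hiS]
    rw [hload' tail i, hload' head i, h2']
    linarith [hcons i hiS]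
  · -- capacity bounds
    intro e
    by_cases he : D e = 0
    · have : x' e = x e := by rw [hx']; simp [he]
      rw [this]; exact hbdd e
    · obtain ⟨hlo, hhi⟩ := hedge e he
      have hfrac := hsupp e he
      constructor
      · have h0 : (0:ℝ) ≤ (⌊x e⌋:ℝ) := by
          have : (0:ℤ) ≤ ⌊x e⌋ := Int.floor_nonneg.mpr (hbdd e).1
          exact_mod_cast this
        linarith
      · have hceil : (⌈x e⌉:ℝ) ≤ (u e : ℝ) := by
          have : ⌈x e⌉ ≤ ((u e : ℤ)) := Int.ceil_le.mpr (by exact_mod_cast (hbdd e).2)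
          exact_mod_cast this
        have := frac_ceil hfrac
        linarith
  · -- measure decreases
    have hsubE : fracE x' ⊆ fracE x := by
      intro e he
      rw [mem_fracE] at he ⊢
      by_cases hD : D e = 0
      · have : x' e = x e := by rw [hx']; simp [hD]
        rw [← this]; exact he
      · exact hsupp e hD
    have hsubV : fracV tail x' ⊆ fracV tail x := by
      intro i hi
      rw [mem_fracV] at hi ⊢
      by_cases hD : δ i = 0
      · have : (∑ e ∈ univ.filter (fun e => tail e = i), x' e)
            = ∑ e ∈ univ.filter (fun e => tail e = i), x e := by
          rw [hload' tail i]
          rw [show (∑ e ∈ univ.filter (fun e => tail e = i), D e) = δ i from rfl, hD]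
          ring
        rw [← this]; exact hi
      · exact (hnode i hD).2
    -- one of the moving quantities becomes integral
    rcases Finset.mem_union.mp htmem with h | h
    · obtain ⟨e, heME, hev⟩ := Finset.mem_image.mp h
      have heD : D e ≠ 0 := (Finset.mem_filter.mp heME).2
      have hint : ∃ z : ℤ, x' e = (z:ℝ) := by
        rw [hx']
        have := stepBound_hit (y := x e) heD
        rw [show t = stepBound (x e) (D e) from hev.symm]
        obtain ⟨z, hz⟩ := this
        exact ⟨z, by rw [← hz]⟩
      have hstrict : fracE x' ⊂ fracE x := by
        refine ⟨hsubE, fun hsup => ?_⟩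
        have heX : e ∈ fracE x := (mem_fracE x e).mpr (hsupp e heD)
        have := hsup heX
        rw [mem_fracE] at this
        exact this hint
      rw [muM, muM]
      have h1 := Finset.card_lt_card hstrict
      have h2 := Finset.card_le_card hsubV
      omega
    · obtain ⟨i, hiMV, hiv⟩ := Finset.mem_image.mp h
      have hiδ : δ i ≠ 0 := (Finset.mem_filter.mp hiMV).2
      have hint : ∃ z : ℤ, (∑ e ∈ univ.filter (fun e => tail e = i), x' e) = (z:ℝ) := by
        rw [hload' tail i]
        have := stepBound_hit (y := load i) hiδ
        rw [show (∑ e ∈ univ.filter (fun e => tail e = i), D e) = δ i from rfl]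
        rw [show (∑ e ∈ univ.filter (fun e => tail e = i), x e) = load i from rfl]
        rw [show t = stepBound (load i) (δ i) from hiv.symm]
        obtain ⟨z, hz⟩ := this
        exact ⟨z, by rw [← hz]⟩
      have hstrict : fracV tail x' ⊂ fracV tail x := by
        refine ⟨hsubV, fun hsup => ?_⟩
        have hiX : i ∈ fracV tail x := (mem_fracV tail x i).mpr (hnode i hiδ).2
        have := hsup hiX
        rw [mem_fracV] at this
        exact this hint
      rw [muM, muM]
      have h1 := Finset.card_lt_card hstrict
      have h2 := Finset.card_le_card hsubE
      omega
  · -- objective changes linearly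
    refine ⟨t, htpos, ?_⟩
    have hlin : ∑ e, c e * x' e = (∑ e, c e * x e) + t * ∑ e, c e * D e := by
      rw [Finset.mul_sum, ← Finset.sum_add_distrib]
      apply Finset.sum_congr rfl
      intro e _
      rw [hx']
      ring
    have hφterm : ∀ i, φ i (∑ e ∈ univ.filter (fun e => tail e = i), x' e)
        = φ i (∑ e ∈ univ.filter (fun e => tail e = i), x e)
          + a i * (t * (∑ e ∈ univ.filter (fun e => tail e = i), D e)) := by
      intro i
      rw [hload' tail i]
      rw [show (∑ e ∈ univ.filter (fun e => tail e = i), D e) = δ i from rfl]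
      rw [show (∑ e ∈ univ.filter (fun e => tail e = i), x e) = load i from rfl]
      by_cases hD : δ i = 0
      · rw [hD]; ring_nf
      · obtain ⟨⟨hlo, hhi⟩, hfrac⟩ := hnode i hD
        have hmem1 : load i ∈ Set.Icc ((⌊load i⌋:ℝ)) ((⌊load i⌋:ℝ) + 1) := by
          constructor
          · exact Int.floor_le _
          · linarith [Int.lt_floor_add_one (load i)]
        have hmem2 : load i + t * δ i ∈ Set.Icc ((⌊load i⌋:ℝ)) ((⌊load i⌋:ℝ) + 1) :=
          ⟨hlo, hhi⟩
        rw [ha i hfrac _ hmem2, ha i hfrac _ hmem1]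
        ring
    have hφsum : ∑ i, φ i (∑ e ∈ univ.filter (fun e => tail e = i), x' e)
        = (∑ i, φ i (∑ e ∈ univ.filter (fun e => tail e = i), x e))
          + t * ∑ i, a i * (∑ e ∈ univ.filter (fun e => tail e = i), D e) := by
      rw [Finset.mul_sum, ← Finset.sum_add_distrib]
      apply Finset.sum_congr rfl
      intro i _
      rw [hφterm i]
      ring
    rw [hlin, hφsum]
    ring

lemma round_step {V E : Type*} [Fintype V] [Fintype E] [DecidableEq V]
    (tail head : E → V) (S : Finset V) (r : V → ℕ) (u : E → ℕ)
    (c : E → ℝ) (w : ℝ)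
    (φ : V → ℝ → ℝ)
    (hφpl : ∀ i, ∀ k : ℕ, ∃ a b : ℝ,
      ∀ y ∈ Set.Icc (k : ℝ) ((k : ℝ) + 1), φ i y = a * y + b)
    (x : E → ℝ)
    (hcons : ∀ i ∈ S, (∑ e ∈ univ.filter (fun e => tail e = i), x e)
          - (∑ e ∈ univ.filter (fun e => head e = i), x e) = (r i : ℝ))
    (hbdd : ∀ e, 0 ≤ x e ∧ x e ≤ (u e : ℝ))
    (e0 : E) (he0 : ¬∃ z : ℤ, x e0 = (z:ℝ)) :
    ∃ x' : E → ℝ,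
      (∀ i ∈ S, (∑ e ∈ univ.filter (fun e => tail e = i), x' e)
          - (∑ e ∈ univ.filter (fun e => head e = i), x' e) = (r i : ℝ)) ∧
      (∀ e, 0 ≤ x' e ∧ x' e ≤ (u e : ℝ)) ∧
      muM tail x' < muM tail x ∧
      ((1 - w) * ∑ e, c e * x' e
          + w * ∑ i, φ i (∑ e ∈ univ.filter (fun e => tail e = i), x' e))
        ≤ ((1 - w) * ∑ e, c e * x e
          + w * ∑ i, φ i (∑ e ∈ univ.filter (fun e => tail e = i), x e)) := by
  classical
  obtain ⟨D, hDnz, hsupp, hdiv, hload0⟩ := exists_direction tail head S r x hcons e0 he0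
  -- affine pieces around the current loads
  have hab : ∀ i, ∃ a0 bb0 : ℝ,
      (¬∃ z : ℤ, (∑ e ∈ univ.filter (fun e => tail e = i), x e) = (z:ℝ)) →
      ∀ y ∈ Set.Icc ((⌊(∑ e ∈ univ.filter (fun e => tail e = i), x e)⌋ : ℝ))
        ((⌊(∑ e ∈ univ.filter (fun e => tail e = i), x e)⌋ : ℝ) + 1),
        φ i y = a0 * y + bb0 := by
    intro i
    set L : ℝ := ∑ e ∈ univ.filter (fun e => tail e = i), x e with hL
    by_cases hf : ∃ z : ℤ, L = (z:ℝ)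
    · exact ⟨0, 0, fun h => absurd hf h⟩
    · obtain ⟨a0, b0, hprop⟩ := hφpl i ((⌊L⌋).toNat)
      refine ⟨a0, b0, fun _ y hy => hprop y ?_⟩
      have h0 : 0 ≤ L := Finset.sum_nonneg fun e _ => (hbdd e).1
      have hcast : (((⌊L⌋).toNat : ℕ) : ℝ) = ((⌊L⌋ : ℤ) : ℝ) := by
        exact_mod_cast congrArg (Int.cast : ℤ → ℝ) (Int.toNat_of_nonneg (Int.floor_nonneg.mpr h0))
      rw [hcast]
      exact hy
  choose a bb ha using hab
  have hkey := direction_step tail head S r u c w φ x hcons hbdd a bb ha D hDnz hsupp hdiv hload0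
  obtain ⟨xp, hconsp, hbddp, hmup, tp, htp, hFp⟩ := hkey
  -- the opposite direction
  have hDnz' : (fun e => -D e) ≠ 0 := by
    intro h
    apply hDnz
    funext e
    have := congrFun h e
    simpa using this
  have hsupp' : ∀ e, (fun e => -D e) e ≠ 0 → ¬∃ z : ℤ, x e = (z:ℝ) := by
    intro e he
    apply hsupp
    simpa using he
  have hsumneg : ∀ (p : E → V) (i : V),
      (∑ e ∈ univ.filter (fun e => p e = i), -D e)
        = -(∑ e ∈ univ.filter (fun e => p e = i), D e) := by
    intro p i
    exact Finset.sum_neg_distrib (f := D)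
  have hdiv' : ∀ i ∈ S, (∑ e ∈ univ.filter (fun e => tail e = i), -D e)
          - (∑ e ∈ univ.filter (fun e => head e = i), -D e) = 0 := by
    intro i hi
    rw [hsumneg tail i, hsumneg head i]
    have := hdiv i hi
    linarith
  have hload0' : ∀ i, (∃ z : ℤ, (∑ e ∈ univ.filter (fun e => tail e = i), x e) = (z:ℝ)) →
      (∑ e ∈ univ.filter (fun e => tail e = i), -D e) = 0 := by
    intro i hi
    rw [hsumneg tail i, hload0 i hi, neg_zero]
  have hkey' := direction_step tail head S r u c w φ x hcons hbdd a bb ha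
    (fun e => -D e) hDnz' hsupp' hdiv' hload0'
  obtain ⟨xm, hconsm, hbddm, hmum, tm, htm, hFm⟩ := hkey'
  -- the slope for the opposite direction is the negative
  set σ : ℝ := (1 - w) * ∑ e, c e * D e
      + w * ∑ i, a i * (∑ e ∈ univ.filter (fun e => tail e = i), D e) with hσ
  have hFm' : ((1 - w) * ∑ e, c e * xm e
      + w * ∑ i, φ i (∑ e ∈ univ.filter (fun e => tail e = i), xm e))
      = ((1 - w) * ∑ e, c e * x e
      + w * ∑ i, φ i (∑ e ∈ univ.filter (fun e => tail e = i), x e)) + tm * (-σ) := by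
    rw [hFm]
    congr 1
    rw [hσ]
    have h1 : ∑ e, c e * -D e = -∑ e, c e * D e := by
      rw [← Finset.sum_neg_distrib]
      apply Finset.sum_congr rfl
      intro e _
      ring
    have h2 : ∑ i, a i * (∑ e ∈ univ.filter (fun e => tail e = i), -D e)
        = -∑ i, a i * (∑ e ∈ univ.filter (fun e => tail e = i), D e) := by
      rw [← Finset.sum_neg_distrib]
      apply Finset.sum_congr rfl
      intro i _
      rw [hsumneg tail i]
      ring
    rw [h1, h2]
    ring
  rcases le_or_gt σ 0 with hσ0 | hσ0
  · refine ⟨xp, hconsp, hbddp, hmup, ?_⟩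
    rw [hFp]
    have : tp * σ ≤ 0 := mul_nonpos_of_nonneg_of_nonpos (le_of_lt htp) hσ0
    linarith
  · refine ⟨xm, hconsm, hbddm, hmum, ?_⟩
    rw [hFm']
    have : tm * (-σ) ≤ 0 := by
      have : 0 ≤ tm * σ := le_of_lt (mul_pos htm hσ0)
      linarith
    linarith

lemma round_all {V E : Type*} [Fintype V] [Fintype E] [DecidableEq V]
    (tail head : E → V) (S : Finset V) (r : V → ℕ) (u : E → ℕ)
    (c : E → ℝ) (w : ℝ)
    (φ : V → ℝ → ℝ)
    (hφpl : ∀ i, ∀ k : ℕ, ∃ a b : ℝ,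
      ∀ y ∈ Set.Icc (k : ℝ) ((k : ℝ) + 1), φ i y = a * y + b) :
    ∀ (n : ℕ) (x : E → ℝ), muM tail x ≤ n →
    (∀ i ∈ S, (∑ e ∈ univ.filter (fun e => tail e = i), x e)
          - (∑ e ∈ univ.filter (fun e => head e = i), x e) = (r i : ℝ)) →
    (∀ e, 0 ≤ x e ∧ x e ≤ (u e : ℝ)) →
    ∃ x' : E → ℝ,
      (∀ i ∈ S, (∑ e ∈ univ.filter (fun e => tail e = i), x' e)
          - (∑ e ∈ univ.filter (fun e => head e = i), x' e) = (r i : ℝ)) ∧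
      (∀ e, 0 ≤ x' e ∧ x' e ≤ (u e : ℝ)) ∧
      (∀ e, ∃ z : ℤ, x' e = (z:ℝ)) ∧
      ((1 - w) * ∑ e, c e * x' e
          + w * ∑ i, φ i (∑ e ∈ univ.filter (fun e => tail e = i), x' e))
        ≤ ((1 - w) * ∑ e, c e * x e
          + w * ∑ i, φ i (∑ e ∈ univ.filter (fun e => tail e = i), x e)) := by
  intro n
  induction n with
  | zero =>
    intro x hmu hcons hbdd
    refine ⟨x, hcons, hbdd, ?_, le_refl _⟩
    intro e
    by_contra he
    have heF : e ∈ fracE x := (mem_fracE x e).mpr he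
    have : 0 < muM tail x := by
      rw [muM]
      have : 0 < (fracE x).card := Finset.card_pos.mpr ⟨e, heF⟩
      omega
    omega
  | succ n ih =>
    intro x hmu hcons hbdd
    by_cases hint : ∀ e, ∃ z : ℤ, x e = (z:ℝ)
    · exact ⟨x, hcons, hbdd, hint, le_refl _⟩
    · push_neg at hint
      obtain ⟨e0, he0⟩ := hint
      have he0' : ¬∃ z : ℤ, x e0 = (z:ℝ) := by
        intro ⟨z, hz⟩
        exact he0 z hz
      obtain ⟨x', hcons', hbdd', hmu', hF'⟩ :=
        round_step tail head S r u c w φ hφpl x hcons hbdd e0 he0'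
      obtain ⟨x'', h1, h2, h3, h4⟩ := ih x' (by omega) hcons' hbdd'
      exact ⟨x'', h1, h2, h3, le_trans h4 hF'⟩

/-- Integrality: with integer rates and capacities and piecewise-linear convex node penalties
with integral breakpoints, the balanced-routing objective admits an optimal solution in which
every edge flow is an integer. -/
theorem exists_integral_optimal {V E : Type*} [Fintype V] [Fintype E] [DecidableEq V]
    (tail head : E → V) (S : Finset V) (r : V → ℕ) (u : E → ℕ)
    (c : E → ℝ) (w : ℝ) (hw0 : 0 ≤ w) (hw1 : w ≤ 1)
    (φ : V → ℝ → ℝ)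
    (hφconv : ∀ i, ConvexOn ℝ (Set.Ici (0 : ℝ)) (φ i))
    (hφpl : ∀ i, ∀ k : ℕ, ∃ a b : ℝ,
      ∀ y ∈ Set.Icc (k : ℝ) ((k : ℝ) + 1), φ i y = a * y + b)
    (K : Set (E → ℝ))
    (hK : K = {x : E → ℝ |
        (∀ i ∈ S, (∑ e ∈ univ.filter (fun e => tail e = i), x e)
          - (∑ e ∈ univ.filter (fun e => head e = i), x e) = (r i : ℝ)) ∧
        ∀ e, 0 ≤ x e ∧ x e ≤ (u e : ℝ)})
    (hne : K.Nonempty)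
    (F : (E → ℝ) → ℝ)
    (hF : F = fun x => (1 - w) * ∑ e, c e * x e +
      w * ∑ i, φ i (∑ e ∈ univ.filter (fun e => tail e = i), x e)) :
    ∃ x ∈ K, (∀ y ∈ K, F x ≤ F y) ∧ ∀ e, ∃ z : ℤ, x e = (z : ℝ) := by
  classical
  subst hK
  subst hF
  -- the set of integral feasible points
  set Z : Set (E → ℝ) := {y | ((∀ i ∈ S, (∑ e ∈ univ.filter (fun e => tail e = i), y e)
          - (∑ e ∈ univ.filter (fun e => head e = i), y e) = (r i : ℝ)) ∧
        ∀ e, 0 ≤ y e ∧ y e ≤ (u e : ℝ)) ∧ ∀ e, ∃ z : ℤ, y e = (z:ℝ)} with hZ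
  -- rounding: from any feasible point we reach an integral one without increasing F
  have hround : ∀ y : (E → ℝ),
      (∀ i ∈ S, (∑ e ∈ univ.filter (fun e => tail e = i), y e)
          - (∑ e ∈ univ.filter (fun e => head e = i), y e) = (r i : ℝ)) →
      (∀ e, 0 ≤ y e ∧ y e ≤ (u e : ℝ)) →
      ∃ y' ∈ Z, ((1 - w) * ∑ e, c e * y' e
          + w * ∑ i, φ i (∑ e ∈ univ.filter (fun e => tail e = i), y' e))
        ≤ ((1 - w) * ∑ e, c e * y e
          + w * ∑ i, φ i (∑ e ∈ univ.filter (fun e => tail e = i), y e)) := by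
    intro y hcons hbdd
    obtain ⟨y', h1, h2, h3, h4⟩ := round_all tail head S r u c w φ hφpl
      (muM tail y) y (le_refl _) hcons hbdd
    exact ⟨y', ⟨⟨h1, h2⟩, h3⟩, h4⟩
  -- Z is finite
  have hZfin : Z.Finite := by
    have : Z ⊆ Set.range (fun (v : ∀ _ : E, Fin 1) => (0 : E → ℝ)) ∨ True := Or.inr trivial
    have hsub : Z ⊆ Set.range (fun (v : ∀ e : E, Fin (u e + 1)) => (fun e => ((v e : ℕ) : ℝ))) := by
      intro y hy
      obtain ⟨⟨hc, hb⟩, hint⟩ := hy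
      have hve : ∀ e, ∃ m : Fin (u e + 1), ((m : ℕ) : ℝ) = y e := by
        intro e
        obtain ⟨z, hz⟩ := hint e
        have hz0 : 0 ≤ z := by
          have := (hb e).1
          rw [hz] at this
          exact_mod_cast this
        have hzu : z ≤ (u e : ℤ) := by
          have := (hb e).2
          rw [hz] at this
          exact_mod_cast this
        refine ⟨⟨z.toNat, ?_⟩, ?_⟩
        · omega
        · rw [hz]
          simp only []
          rw [show ((z.toNat : ℕ) : ℝ) = ((z.toNat : ℤ) : ℝ) by push_cast; ring]
          rw [Int.toNat_of_nonneg hz0]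
      choose v hv using hve
      exact ⟨v, funext fun e => hv e⟩
    exact Set.Finite.subset (Set.finite_range _) hsub
  -- Z is nonempty
  obtain ⟨x0, hx0⟩ := hne
  obtain ⟨y0, hy0Z, _⟩ := hround x0 hx0.1 hx0.2
  -- minimize over Z
  have hZne : hZfin.toFinset.Nonempty := ⟨y0, hZfin.mem_toFinset.mpr hy0Z⟩
  obtain ⟨xm, hxmZ, hxmmin⟩ := Finset.exists_min_image hZfin.toFinset
    (fun y => (1 - w) * ∑ e, c e * y e
          + w * ∑ i, φ i (∑ e ∈ univ.filter (fun e => tail e = i), y e)) hZne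
  have hxmZ' : xm ∈ Z := hZfin.mem_toFinset.mp hxmZ
  refine ⟨xm, hxmZ'.1, ?_, hxmZ'.2⟩
  intro y hy
  obtain ⟨y', hy'Z, hy'le⟩ := hround y hy.1 hy.2
  exact le_trans (hxmmin y' (hZfin.mem_toFinset.mpr hy'Z)) hy'le
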